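/- Let A be an n×n real matrix with nonzero rows a₁ᵀ,…,aₙᵀ and ker A = 0. Let G be a connected undirected simple graph on n vertices with Laplacian L, let Pᵢ = I − aᵢaᵢᵀ/(aᵢᵀaᵢ), P = diag(P₁,…,Pₙ), and L̄ = L ⊗ Iₙ. Then the symmetric matrix P L̄ P + I − P is positive definite; that is, it is positive semidefinite (as the sum of the positive semidefinite matrices P L̄ P and I − P) and nonsingular: if P L̄ P α + (I − P)α = 0 for α ∈ ℝ^{n²}, then α = 0. -/

import Mathlib

open Matrix
open scoped Kronecker

/-- The orthogonal projection `Pᵢ = I - aᵢaᵢᵀ/(aᵢᵀaᵢ)` onto the hyperplane `{z : aᵢᵀz = 0}`. -/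
noncomputable def projMat {n : ℕ} (a : Fin n → ℝ) : Matrix (Fin n) (Fin n) ℝ :=
  1 - (a ⬝ᵥ a)⁻¹ • vecMulVec a a

/-- The block-diagonal matrix `P = diag(P₁,…,Pₘ)`, acting on `(ℝⁿ)ᵐ ≅ ℝ^{mn}`
(indexed by pairs `(block, coordinate)`). -/
noncomputable def blockP {m n : ℕ} (a : Fin m → Fin n → ℝ) :
    Matrix (Fin m × Fin n) (Fin m × Fin n) ℝ :=
  Matrix.of fun p q => if p.1 = q.1 then projMat (a p.1) p.2 q.2 else 0

lemma vmv_mul {n : ℕ} (a : Fin n → ℝ) :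
    vecMulVec a a * vecMulVec a a = (a ⬝ᵥ a) • vecMulVec a a := by
  ext i j
  simp [mul_apply, vecMulVec_apply, dotProduct, Finset.sum_mul, Finset.mul_sum]
  ring_nf
  congr 1; ext k; ring

lemma projMat_transpose {n : ℕ} (a : Fin n → ℝ) : (projMat a)ᵀ = projMat a := by
  unfold projMat
  rw [transpose_sub, transpose_smul, transpose_one]
  congr 1
  ext i j
  simp [vecMulVec_apply, mul_comm]

lemma projMat_idem {n : ℕ} {a : Fin n → ℝ} (ha : a ≠ 0) :
    projMat a * projMat a = projMat a := by
  have hd : a ⬝ᵥ a ≠ 0 := fun h => ha (dotProduct_self_eq_zero.mp h)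
  unfold projMat
  rw [sub_mul, mul_sub, mul_sub, one_mul, one_mul, mul_one, smul_mul_smul_comm, vmv_mul,
    smul_smul, mul_assoc, inv_mul_cancel₀ hd, mul_one]
  abel

lemma blockP_transpose {m n : ℕ} (a : Fin m → Fin n → ℝ) : (blockP a)ᵀ = blockP a := by
  ext ⟨i, j⟩ ⟨k, l⟩
  simp only [transpose_apply, blockP, of_apply]
  rcases eq_or_ne i k with h | h
  · subst h
    rw [if_pos rfl, if_pos rfl]
    conv_rhs => rw [← projMat_transpose (a i)]
    rfl
  · rw [if_neg (Ne.symm h), if_neg h]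

lemma blockP_mul_blockP {m n : ℕ} {a : Fin m → Fin n → ℝ} (ha : ∀ i, a i ≠ 0) :
    blockP a * blockP a = blockP a := by
  ext ⟨i, j⟩ ⟨k, l⟩
  simp only [mul_apply, blockP, of_apply, Fintype.sum_prod_type]
  rcases eq_or_ne i k with h | h
  · subst h
    rw [if_pos rfl, Finset.sum_eq_single i]
    · simp only [eq_self_iff_true, if_true]
      rw [← mul_apply, projMat_idem (ha i)]
    · intro b _ hb
      simp [if_neg (Ne.symm hb)]
    · simp
  · rw [if_neg h]
    apply Finset.sum_eq_zero
    intro b _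
    apply Finset.sum_eq_zero
    intro s _
    rcases eq_or_ne i b with hb | hb
    · rw [if_neg (fun hq : b = k => h (hb.trans hq)), mul_zero]
    · rw [if_neg hb, zero_mul]

lemma vmv_mulVec {n : ℕ} (a w : Fin n → ℝ) :
    vecMulVec a a *ᵥ w = (a ⬝ᵥ w) • a := by
  ext i
  simp only [mulVec, dotProduct, vecMulVec_apply, Pi.smul_apply, smul_eq_mul, Finset.sum_mul]
  congr 1; ext k; ring

lemma projMat_fixed {n : ℕ} {a w : Fin n → ℝ} (ha : a ≠ 0)
    (h : projMat a *ᵥ w = w) : a ⬝ᵥ w = 0 := by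
  have hd : a ⬝ᵥ a ≠ 0 := fun h' => ha (dotProduct_self_eq_zero.mp h')
  have h2 : ((a ⬝ᵥ a)⁻¹ * (a ⬝ᵥ w)) • a = 0 := by
    have := h
    rw [projMat, sub_mulVec, one_mulVec, smul_mulVec, vmv_mulVec, smul_smul] at this
    have h3 := sub_eq_self.mp this
    exact h3
  rcases smul_eq_zero.mp h2 with h3 | h3
  · rcases mul_eq_zero.mp h3 with h4 | h4
    · exact absurd h4 (inv_ne_zero hd)
    · exact h4
  · exact absurd h3 ha

lemma blockP_mulVec {m n : ℕ} (a : Fin m → Fin n → ℝ) (v : Fin m × Fin n → ℝ) (i : Fin m)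
    (j : Fin n) : (blockP a *ᵥ v) (i, j) = (projMat (a i) *ᵥ fun l => v (i, l)) j := by
  simp only [mulVec, dotProduct, blockP, of_apply, Fintype.sum_prod_type, ite_mul, zero_mul]
  rw [Finset.sum_eq_single i]
  · simp
  · intro b _ hb; simp [Ne.symm hb]
  · simp

lemma kron_one_mulVec {n : ℕ} (L : Matrix (Fin n) (Fin n) ℝ) (x : Fin n × Fin n → ℝ)
    (i j : Fin n) :
    ((L ⊗ₖ (1 : Matrix (Fin n) (Fin n) ℝ)) *ᵥ x) (i, j) = (L *ᵥ fun k => x (k, j)) i := by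
  simp only [mulVec, dotProduct, kroneckerMap_apply, Fintype.sum_prod_type, one_apply,
    mul_ite, mul_one, mul_zero, ite_mul, zero_mul]
  congr 1; ext k
  rw [Finset.sum_eq_single j] <;> simp +contextual [Ne.symm]

lemma dot_kron_one {n : ℕ} (L : Matrix (Fin n) (Fin n) ℝ) (x : Fin n × Fin n → ℝ) :
    x ⬝ᵥ ((L ⊗ₖ (1 : Matrix (Fin n) (Fin n) ℝ)) *ᵥ x) =
      ∑ j, (fun k => x (k, j)) ⬝ᵥ (L *ᵥ fun k => x (k, j)) := by
  rw [show x ⬝ᵥ ((L ⊗ₖ (1 : Matrix (Fin n) (Fin n) ℝ)) *ᵥ x) =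
      ∑ i, ∑ j, x (i, j) * ((L ⊗ₖ (1 : Matrix (Fin n) (Fin n) ℝ)) *ᵥ x) (i, j) by
    simp [dotProduct, Fintype.sum_prod_type]]
  rw [Finset.sum_comm]
  congr 1; ext j
  simp only [dotProduct]
  congr 1; ext i
  rw [kron_one_mulVec]


/-- If `A` has nonzero rows and trivial kernel and `G` is connected, then
`P L̄ P + I - P` is positive definite: it is positive semidefinite (being the sum of the
positive semidefinite matrices `P L̄ P` and `I - P`) and nonsingular. -/
theorem PLP_posdef
    {n : ℕ} (A : Matrix (Fin n) (Fin n) ℝ)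
    (hrows : ∀ i, A i ≠ 0)
    (hker : ∀ x : Fin n → ℝ, A *ᵥ x = 0 → x = 0)
    (G : SimpleGraph (Fin n)) [DecidableRel G.Adj] (hG : G.Connected)
    (P Lbar : Matrix (Fin n × Fin n) (Fin n × Fin n) ℝ)
    (hP : P = blockP (fun i => A i))
    (hL : Lbar = G.lapMatrix ℝ ⊗ₖ (1 : Matrix (Fin n) (Fin n) ℝ)) :
    (P * Lbar * P + 1 - P).PosDef ∧
    (P * Lbar * P).PosSemidef ∧ (1 - P).PosSemidef ∧ (P * Lbar * P + 1 - P).PosSemidef ∧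
    (∀ α : Fin n × Fin n → ℝ, (P * Lbar * P + (1 - P)) *ᵥ α = 0 → α = 0) := by
  subst hP hL
  set L : Matrix (Fin n) (Fin n) ℝ := G.lapMatrix ℝ with hLdef
  set P : Matrix (Fin n × Fin n) (Fin n × Fin n) ℝ := blockP (fun i => A i) with hPdef
  set Lb : Matrix (Fin n × Fin n) (Fin n × Fin n) ℝ := L ⊗ₖ (1 : Matrix (Fin n) (Fin n) ℝ)
    with hLbdef
  have hPt : Pᵀ = P := blockP_transpose _
  have hPP : P * P = P := blockP_mul_blockP hrows
  have hPh : Pᴴ = P := by rw [conjTranspose_eq_transpose_of_trivial, hPt]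
  have hLbHerm : Lb.IsHermitian := by
    rw [IsHermitian, conjTranspose_eq_transpose_of_trivial, hLbdef, ← kroneckerMap_transpose,
      transpose_one]
    rw [show Lᵀ = L from G.isSymm_lapMatrix (R := ℝ)]
  have hLbPSD : Lb.PosSemidef := by
    refine PosSemidef.of_dotProduct_mulVec_nonneg hLbHerm fun x => ?_
    rw [star_trivial, hLbdef, dot_kron_one]
    refine Finset.sum_nonneg fun j _ => ?_
    simpa using (SimpleGraph.posSemidef_lapMatrix ℝ G).dotProduct_mulVec_nonneg (fun k => x (k, j))
  have hPSD1 : (P * Lb * P).PosSemidef := by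
    have := hLbPSD.mul_mul_conjTranspose_same P
    rwa [hPh] at this
  have h1P : (1 - P) * (1 - P) = 1 - P := by
    rw [sub_mul, one_mul, mul_sub, mul_one, hPP, sub_self, sub_zero]
  have hPSD2 : (1 - P).PosSemidef := by
    have h : (1 - P)ᴴ * (1 - P) = 1 - P := by
      rw [conjTranspose_sub, conjTranspose_one, hPh, h1P]
    rw [← h]
    exact posSemidef_conjTranspose_mul_self _
  have hsum_eq : P * Lb * P + 1 - P = P * Lb * P + (1 - P) := add_sub_assoc _ _ _
  have hPSDsum : (P * Lb * P + (1 - P)).PosSemidef := hPSD1.add hPSD2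
  have key : ∀ x : Fin n × Fin n → ℝ, x ⬝ᵥ ((P * Lb * P + (1 - P)) *ᵥ x) = 0 → x = 0 := by
    intro x hx
    rw [add_mulVec, dotProduct_add] at hx
    have hq1 : 0 ≤ x ⬝ᵥ ((P * Lb * P) *ᵥ x) := by simpa using hPSD1.dotProduct_mulVec_nonneg x
    have hq2 : 0 ≤ x ⬝ᵥ ((1 - P) *ᵥ x) := by simpa using hPSD2.dotProduct_mulVec_nonneg x
    have hz2 : x ⬝ᵥ ((1 - P) *ᵥ x) = 0 := by linarith
    have hz1 : x ⬝ᵥ ((P * Lb * P) *ᵥ x) = 0 := by linarith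
    have hPx : P *ᵥ x = x := by
      have h := (hPSD2.dotProduct_mulVec_zero_iff x).mp (by rwa [star_trivial])
      rw [sub_mulVec, one_mulVec, sub_eq_zero] at h
      exact h.symm
    have hvm : x ᵥ* P = x := by
      rw [← mulVec_transpose, hPt, hPx]
    have hLbx : x ⬝ᵥ (Lb *ᵥ x) = 0 := by
      have : (P * Lb * P) *ᵥ x = P *ᵥ (Lb *ᵥ x) := by
        rw [← mulVec_mulVec, ← mulVec_mulVec, hPx]
      rw [this, dotProduct_mulVec, hvm] at hz1
      exact hz1
    have hcols : ∀ j i k, x (i, j) = x (k, j) := by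
      rw [hLbdef, dot_kron_one] at hLbx
      intro j
      have hterm : (fun k => x (k, j)) ⬝ᵥ (L *ᵥ fun k => x (k, j)) = 0 := by
        have hnn : ∀ j' ∈ Finset.univ,
            (0:ℝ) ≤ (fun k => x (k, j')) ⬝ᵥ (L *ᵥ fun k => x (k, j')) := fun j' _ => by
          simpa using (SimpleGraph.posSemidef_lapMatrix ℝ G).dotProduct_mulVec_nonneg (fun k => x (k, j'))
        exact (Finset.sum_eq_zero_iff_of_nonneg hnn).mp hLbx j (Finset.mem_univ j)
      have hreach := (SimpleGraph.lapMatrix_toLinearMap₂'_apply'_eq_zero_iff_forall_reachable G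
        (fun k => x (k, j))).mp (by rwa [Matrix.toLinearMap₂'_apply'])
      intro i k
      exact hreach i k (hG.preconnected i k)
    have hne : Nonempty (Fin n) := hG.nonempty
    obtain ⟨i0⟩ := hne
    set y : Fin n → ℝ := fun j => x (i0, j) with hy
    have hAy : A *ᵥ y = 0 := by
      funext i
      have hfix : projMat (A i) *ᵥ (fun l => x (i, l)) = fun l => x (i, l) := by
        funext j
        rw [← blockP_mulVec (fun i => A i) x i j]
        exact congrFun hPx (i, j)
      have h0 : A i ⬝ᵥ (fun l => x (i, l)) = 0 := projMat_fixed (hrows i) hfix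
      have hyy : y = fun l => x (i, l) := funext fun l => hcols l i0 i
      show A i ⬝ᵥ y = 0
      rw [hyy]
      exact h0
    have hy0 : y = 0 := hker y hAy
    funext p
    obtain ⟨i, j⟩ := p
    calc x (i, j) = x (i0, j) := hcols j i i0
    _ = y j := rfl
    _ = 0 := by rw [hy0]; rfl
  refine ⟨?_, hPSD1, hPSD2, by rw [hsum_eq]; exact hPSDsum, ?_⟩
  · rw [hsum_eq]
    refine PosDef.of_dotProduct_mulVec_pos hPSDsum.1 fun x hx => lt_of_le_of_ne (by simpa using hPSDsum.dotProduct_mulVec_nonneg x) ?_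
    intro h
    exact hx (key x (by rw [star_trivial] at h; exact h.symm))
  · intro α hα
    exact key α (by rw [hα, dotProduct_zero])
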